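/- arXiv:1809.11165 — 2 statements merged into one kernel-verified Lean document; each statement's English description precedes it below -/
import Mathlib

section
/- If z has i.i.d. Rademacher entries and A ∈ ℝ^{n×n} is symmetric, then Var(zᵀ A z) = 2 ∑_{i≠j} A_{ij}². -/
open Matrix Finset

private def sg (b : Bool) : ℝ := if b then 1 else -1

private lemma sg_sq (b : Bool) : sg b * sg b = 1 := by cases b <;> simp [sg]

private lemma sum_one {n : ℕ} : ∑ _ε : Fin n → Bool, (1:ℝ) = 2 ^ n := by
  simp [Finset.card_univ]

private lemma sum_prod_sg {n : ℕ} (S : Finset (Fin n)) (hS : S.Nonempty) :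
    ∑ ε : Fin n → Bool, ∏ i ∈ S, sg (ε i) = 0 := by
  have h : ∀ ε : Fin n → Bool, ∏ i ∈ S, sg (ε i)
      = ∏ i : Fin n, (if i ∈ S then sg (ε i) else 1) := by
    intro ε
    rw [Finset.prod_ite_mem, Finset.univ_inter]
  simp_rw [h]
  rw [← Fintype.prod_sum (fun i (b : Bool) => if i ∈ S then sg b else 1)]
  obtain ⟨a, ha⟩ := hS
  apply Finset.prod_eq_zero (Finset.mem_univ a)
  simp [ha, sg]

private lemma pair {n : ℕ} (i j : Fin n) :
    ∑ ε : Fin n → Bool, sg (ε i) * sg (ε j) = if i = j then (2:ℝ)^n else 0 := by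
  by_cases h : i = j
  · subst h; simp_rw [sg_sq]; simp [sum_one]
  · simp only [h, if_false]
    have := sum_prod_sg ({i, j} : Finset (Fin n)) ⟨i, by simp⟩
    rwa [Finset.sum_congr rfl (fun ε _ => Finset.prod_pair h)] at this

private lemma quad {n : ℕ} {i j k l : Fin n} (hij : i ≠ j) (hkl : k ≠ l) :
    ∑ ε : Fin n → Bool, (sg (ε i) * sg (ε j)) * (sg (ε k) * sg (ε l))
      = if (i = k ∧ j = l) ∨ (i = l ∧ j = k) then (2:ℝ)^n else 0 := by
  have cancel : ∀ a b c : Bool, (sg a * sg b) * (sg a * sg c) = sg b * sg c := by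
    intro a b c; rw [mul_mul_mul_comm, sg_sq, one_mul]
  by_cases hik : i = k
  · subst hik
    simp_rw [cancel]
    rw [pair]
    by_cases hjl : j = l
    · simp [hjl]
    · simp [hjl, Ne.symm hij]
  · by_cases hil : i = l
    · subst hil
      have : ∀ ε : Fin n → Bool,
          (sg (ε i) * sg (ε j)) * (sg (ε k) * sg (ε i)) = sg (ε j) * sg (ε k) := by
        intro ε
        cases ε i <;> cases ε j <;> cases ε k <;> norm_num [sg]
      simp_rw [this]
      rw [pair]
      by_cases hjk : j = k
      · simp [hjk]
      · simp [hjk, hik]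
    · -- i ∉ {k, l}
      have hrhs : ¬((i = k ∧ j = l) ∨ (i = l ∧ j = k)) := by
        rintro (⟨h, -⟩ | ⟨h, -⟩) <;> [exact hik h; exact hil h]
      rw [if_neg hrhs]
      by_cases hjk : j = k
      · subst hjk
        have : ∀ ε : Fin n → Bool,
            (sg (ε i) * sg (ε j)) * (sg (ε j) * sg (ε l)) = sg (ε i) * sg (ε l) := by
          intro ε
          cases ε i <;> cases ε j <;> cases ε l <;> norm_num [sg]
        simp_rw [this]
        rw [pair, if_neg hil]
      · by_cases hjl : j = l
        · subst hjl
          have : ∀ ε : Fin n → Bool,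
              (sg (ε i) * sg (ε j)) * (sg (ε k) * sg (ε j)) = sg (ε i) * sg (ε k) := by
            intro ε
            cases ε i <;> cases ε j <;> cases ε k <;> norm_num [sg]
          simp_rw [this]
          rw [pair, if_neg hik]
        · -- all distinct
          have hmem : ∀ ε : Fin n → Bool,
              (sg (ε i) * sg (ε j)) * (sg (ε k) * sg (ε l))
                = ∏ t ∈ ({i, j, k, l} : Finset (Fin n)), sg (ε t) := by
            intro ε
            rw [Finset.prod_insert (by simp [hij, hik, hil]),
              Finset.prod_insert (by simp [hjk, hjl]),
              Finset.prod_insert (by simp [hkl]), Finset.prod_singleton, mul_assoc]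
          simp_rw [hmem]
          exact sum_prod_sg _ ⟨i, by simp⟩

private lemma key2 {n : ℕ} (A : Matrix (Fin n) (Fin n) ℝ) {i j : Fin n} (hij : i ≠ j) :
    ∑ k : Fin n, ∑ l ∈ Finset.univ \ {k},
      A k l * (if (i = k ∧ j = l) ∨ (i = l ∧ j = k) then (2:ℝ)^n else 0)
      = (A i j + A j i) * 2^n := by
  have hsplit : ∀ k l : Fin n,
      (if (i = k ∧ j = l) ∨ (i = l ∧ j = k) then (2:ℝ)^n else 0)
        = (if i = k ∧ j = l then (2:ℝ)^n else 0) + (if i = l ∧ j = k then (2:ℝ)^n else 0) := by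
    intro k l
    by_cases h2 : i = l ∧ j = k
    · have h1 : ¬(i = k ∧ j = l) := fun h1 => hij (h2.1.trans h1.2.symm)
      rw [if_pos (Or.inr h2), if_neg h1, if_pos h2, zero_add]
    · by_cases h1 : i = k ∧ j = l
      · rw [if_pos (Or.inl h1), if_pos h1, if_neg h2, add_zero]
      · rw [if_neg (by tauto), if_neg h1, if_neg h2, add_zero]
  simp_rw [hsplit, mul_add, Finset.sum_add_distrib]
  have e1 : ∑ k : Fin n, ∑ l ∈ Finset.univ \ {k},
      A k l * (if i = k ∧ j = l then (2:ℝ)^n else 0) = A i j * 2^n := by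
    rw [Finset.sum_eq_single i]
    · simp only [true_and, mul_ite, mul_zero]
      rw [Finset.sum_ite_eq]
      simp [Finset.mem_sdiff, Ne.symm hij]
    · intro k _ hk
      exact Finset.sum_eq_zero fun l _ => by rw [if_neg (fun h => hk h.1.symm), mul_zero]
    · intro h; exact absurd (Finset.mem_univ i) h
  have e2 : ∑ k : Fin n, ∑ l ∈ Finset.univ \ {k},
      A k l * (if i = l ∧ j = k then (2:ℝ)^n else 0) = A j i * 2^n := by
    rw [Finset.sum_eq_single j]
    · simp only [and_true, mul_ite, mul_zero]
      rw [Finset.sum_ite_eq]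
      simp [Finset.mem_sdiff, hij]
    · intro k _ hk
      exact Finset.sum_eq_zero fun l _ => by rw [if_neg (fun h => hk h.2.symm), mul_zero]
    · intro h; exact absurd (Finset.mem_univ j) h
  rw [e1, e2]; ring

/-- Variance of the Hutchinson estimator with Rademacher probes: if `z` has i.i.d. Rademacher
entries (encoded by averaging over all `ε : Fin n → Bool`) and `A` is symmetric, then
`Var(zᵀ A z) = 2 ∑_{i ≠ j} A_{ij}²`. -/
theorem rademacher_hutchinson_variance {n : ℕ}
    (A : Matrix (Fin n) (Fin n) ℝ) (hA : A.IsSymm) :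
    ((2 : ℝ) ^ n)⁻¹ * (∑ ε : Fin n → Bool,
        ((fun i => if ε i then (1 : ℝ) else -1) ⬝ᵥ
          A.mulVec (fun i => if ε i then (1 : ℝ) else -1)) ^ 2)
      - (((2 : ℝ) ^ n)⁻¹ * ∑ ε : Fin n → Bool,
        (fun i => if ε i then (1 : ℝ) else -1) ⬝ᵥ
          A.mulVec (fun i => if ε i then (1 : ℝ) else -1)) ^ 2
      = 2 * ∑ i : Fin n, ∑ j ∈ Finset.univ \ {i}, (A i j) ^ 2 := by
  classical
  set T : ℝ := ∑ i, A i i with hT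
  set S : ℝ := ∑ i : Fin n, ∑ j ∈ Finset.univ \ {i}, (A i j) ^ 2 with hS
  set R : (Fin n → Bool) → ℝ :=
    fun ε => ∑ i : Fin n, ∑ j ∈ Finset.univ \ {i}, A i j * (sg (ε i) * sg (ε j)) with hR
  have hconst : ∀ c : ℝ, ∑ _ε : Fin n → Bool, c = 2^n * c := by
    intro c
    rw [Finset.sum_const, nsmul_eq_mul, Finset.card_univ]
    norm_num
  have hQ : ∀ ε : Fin n → Bool,
      ((fun i => if ε i then (1 : ℝ) else -1) ⬝ᵥ
        A.mulVec (fun i => if ε i then (1 : ℝ) else -1)) = T + R ε := by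
    intro ε
    show (fun i => sg (ε i)) ⬝ᵥ A.mulVec (fun i => sg (ε i)) = _
    simp only [dotProduct, mulVec, hR, hT, Finset.mul_sum]
    rw [← Finset.sum_add_distrib]
    refine Finset.sum_congr rfl fun i _ => ?_
    rw [Finset.sum_eq_sum_sdiff_singleton_add (Finset.mem_univ i), add_comm]
    congr 1
    · cases ε i <;> simp [sg]
    · exact Finset.sum_congr rfl fun j _ => by ring
  have hRzero : ∑ ε : Fin n → Bool, R ε = 0 := by
    rw [Finset.sum_comm]
    refine Finset.sum_eq_zero fun i _ => ?_
    rw [Finset.sum_comm]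
    refine Finset.sum_eq_zero fun j hj => ?_
    have hji : j ≠ i := by simpa using (Finset.mem_sdiff.mp hj).2
    rw [← Finset.mul_sum, pair, if_neg (fun h => hji h.symm), mul_zero]
  have hRsq : ∑ ε : Fin n → Bool, R ε ^ 2 = 2^n * (2 * S) := by
    have expand : ∀ ε : Fin n → Bool, R ε ^ 2
        = ∑ i : Fin n, ∑ j ∈ Finset.univ \ {i}, ∑ k : Fin n, ∑ l ∈ Finset.univ \ {k},
            (A i j * A k l) * ((sg (ε i) * sg (ε j)) * (sg (ε k) * sg (ε l))) := by
      intro ε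
      rw [sq, hR, Finset.sum_mul_sum]
      refine Finset.sum_congr rfl fun i _ => ?_
      rw [Finset.sum_comm]
      refine Finset.sum_congr rfl fun j _ => ?_
      rw [Finset.sum_mul_sum]
      refine Finset.sum_congr rfl fun k _ => Finset.sum_congr rfl fun l _ => by ring
    calc ∑ ε : Fin n → Bool, R ε ^ 2
        = ∑ i : Fin n, ∑ j ∈ Finset.univ \ {i}, ∑ k : Fin n, ∑ l ∈ Finset.univ \ {k},
            ∑ ε : Fin n → Bool,
            (A i j * A k l) * ((sg (ε i) * sg (ε j)) * (sg (ε k) * sg (ε l))) := by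
          simp_rw [expand]
          rw [Finset.sum_comm]
          refine Finset.sum_congr rfl fun i _ => ?_
          rw [Finset.sum_comm]
          refine Finset.sum_congr rfl fun j _ => ?_
          rw [Finset.sum_comm]
          refine Finset.sum_congr rfl fun k _ => ?_
          rw [Finset.sum_comm]
      _ = ∑ i : Fin n, ∑ j ∈ Finset.univ \ {i},
            A i j * ((A i j + A j i) * 2^n) := by
          refine Finset.sum_congr rfl fun i _ => Finset.sum_congr rfl fun j hj => ?_
          have hji : i ≠ j := by
            have := (Finset.mem_sdiff.mp hj).2
            simp only [Finset.mem_singleton] at this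
            exact fun h => this h.symm
          have step : ∀ k : Fin n, ∀ l ∈ Finset.univ \ {k},
              ∑ ε : Fin n → Bool,
                (A i j * A k l) * ((sg (ε i) * sg (ε j)) * (sg (ε k) * sg (ε l)))
              = A i j * (A k l * (if (i = k ∧ j = l) ∨ (i = l ∧ j = k) then (2:ℝ)^n else 0)) := by
            intro k hl hlk
            have hkl : k ≠ hl := by
              have := (Finset.mem_sdiff.mp hlk).2
              simp only [Finset.mem_singleton] at this
              exact fun h => this h.symm
            rw [← Finset.mul_sum, quad hji hkl, mul_assoc]
          calc ∑ k : Fin n, ∑ l ∈ Finset.univ \ {k}, ∑ ε : Fin n → Bool,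
                (A i j * A k l) * ((sg (ε i) * sg (ε j)) * (sg (ε k) * sg (ε l)))
              = ∑ k : Fin n, ∑ l ∈ Finset.univ \ {k},
                A i j * (A k l * (if (i = k ∧ j = l) ∨ (i = l ∧ j = k) then (2:ℝ)^n else 0)) :=
                Finset.sum_congr rfl fun k _ => Finset.sum_congr rfl fun l hl => step k l hl
            _ = A i j * ((A i j + A j i) * 2^n) := by
                rw [← key2 A hji, Finset.mul_sum]
                exact Finset.sum_congr rfl fun k _ => by rw [Finset.mul_sum]
      _ = ∑ i : Fin n, ∑ j ∈ Finset.univ \ {i}, ((2:ℝ)^n * 2) * A i j ^ 2 := by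
          have hsymm : ∀ a b : Fin n, A b a = A a b := fun a b => hA.apply a b
          refine Finset.sum_congr rfl fun i _ => Finset.sum_congr rfl fun j _ => ?_
          rw [hsymm i j]; ring
      _ = 2^n * (2 * S) := by
          simp_rw [← Finset.mul_sum]
          rw [hS]; ring
  have h2n : ((2:ℝ)^n) ≠ 0 := by positivity
  simp_rw [hQ]
  have hsum1 : ∑ ε : Fin n → Bool, (T + R ε) = 2^n * T := by
    rw [Finset.sum_add_distrib, hRzero, add_zero, hconst]
  have hsum2 : ∑ ε : Fin n → Bool, (T + R ε) ^ 2 = 2^n * T^2 + 2^n * (2 * S) := by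
    have h : ∀ ε : Fin n → Bool, (T + R ε)^2 = T^2 + (2*T) * R ε + R ε ^2 := fun ε => by ring
    simp_rw [h]
    rw [Finset.sum_add_distrib, Finset.sum_add_distrib, ← Finset.mul_sum, hRzero, mul_zero,
      add_zero, hRsq, hconst]
  rw [hsum1, hsum2]
  field_simp
  ring
end

section
/- Let K = K_XX + σ² I where K_XX is symmetric positive semidefinite, and let P̂ = P + σ² I where P is symmetric positive semidefinite with E := K_XX − P. If ‖E‖₂ ≤ ε, then every eigenvalue λ of P̂^{-1/2} K P̂^{-1/2} satisfies 1 − ε/σ² ≤ λ ≤ 1 + ε/σ², and hence for ε < σ², the condition number satisfies κ(P̂⁻¹ K) ≤ (1 + ε/σ²)/(1 − ε/σ²). -/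
open Matrix Finset

section Aux

variable {n : ℕ}

private lemma smul_psd {A : Matrix (Fin n) (Fin n) ℝ} (hA : A.PosSemidef) {c : ℝ} (hc : 0 ≤ c) :
    (c • A).PosSemidef := by
  refine .of_dotProduct_mulVec_nonneg (by rw [Matrix.IsHermitian, conjTranspose_smul, star_trivial, hA.1.eq]) fun x => ?_
  rw [smul_mulVec, dotProduct_smul]
  exact mul_nonneg hc (hA.dotProduct_mulVec_nonneg x)

private lemma spectral_real {A : Matrix (Fin n) (Fin n) ℝ} (hA : A.IsHermitian) :
    A = (hA.eigenvectorUnitary : Matrix (Fin n) (Fin n) ℝ)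
        * diagonal hA.eigenvalues
        * (hA.eigenvectorUnitary : Matrix (Fin n) (Fin n) ℝ)ᴴ := by
  conv_lhs => rw [hA.spectral_theorem]
  congr 1

private lemma UUH {A : Matrix (Fin n) (Fin n) ℝ} (hA : A.IsHermitian) :
    (hA.eigenvectorUnitary : Matrix (Fin n) (Fin n) ℝ)
      * (hA.eigenvectorUnitary : Matrix (Fin n) (Fin n) ℝ)ᴴ = 1 :=
  (Matrix.mem_unitaryGroup_iff).mp hA.eigenvectorUnitary.2

private lemma shift_add_psd {A : Matrix (Fin n) (Fin n) ℝ} (hA : A.IsHermitian) {c : ℝ}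
    (h : ∀ i, -c ≤ hA.eigenvalues i) :
    (c • (1 : Matrix (Fin n) (Fin n) ℝ) + A).PosSemidef := by
  have key : c • (1 : Matrix (Fin n) (Fin n) ℝ) + A
      = (hA.eigenvectorUnitary : Matrix (Fin n) (Fin n) ℝ)
        * diagonal (fun i => c + hA.eigenvalues i)
        * (hA.eigenvectorUnitary : Matrix (Fin n) (Fin n) ℝ)ᴴ := by
    have hd : diagonal (fun i => c + hA.eigenvalues i)
        = c • (1 : Matrix (Fin n) (Fin n) ℝ) + diagonal hA.eigenvalues := by
      rw [smul_one_eq_diagonal, ← diagonal_add]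
    rw [hd, mul_add, add_mul, Matrix.mul_smul, mul_one, Matrix.smul_mul, UUH hA,
      ← spectral_real hA]
  rw [key]
  exact (posSemidef_diagonal_iff.mpr fun i => by linarith [h i]).mul_mul_conjTranspose_same _

private lemma shift_sub_psd {A : Matrix (Fin n) (Fin n) ℝ} (hA : A.IsHermitian) {c : ℝ}
    (h : ∀ i, hA.eigenvalues i ≤ c) :
    (c • (1 : Matrix (Fin n) (Fin n) ℝ) - A).PosSemidef := by
  have key : c • (1 : Matrix (Fin n) (Fin n) ℝ) - A
      = (hA.eigenvectorUnitary : Matrix (Fin n) (Fin n) ℝ)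
        * diagonal (fun i => c - hA.eigenvalues i)
        * (hA.eigenvectorUnitary : Matrix (Fin n) (Fin n) ℝ)ᴴ := by
    have hd : diagonal (fun i => c - hA.eigenvalues i)
        = c • (1 : Matrix (Fin n) (Fin n) ℝ) - diagonal hA.eigenvalues := by
      rw [smul_one_eq_diagonal, ← diagonal_sub]
    rw [hd, mul_sub, sub_mul, Matrix.mul_smul, mul_one, Matrix.smul_mul, UUH hA,
      ← spectral_real hA]
  rw [key]
  exact (posSemidef_diagonal_iff.mpr fun i => by linarith [h i]).mul_mul_conjTranspose_same _

private lemma eigvec_dot_self {M : Matrix (Fin n) (Fin n) ℝ} (hM : M.IsHermitian) (i : Fin n) :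
    star (⇑(hM.eigenvectorBasis i)) ⬝ᵥ ⇑(hM.eigenvectorBasis i) = (1 : ℝ) := by
  have h1 : ‖hM.eigenvectorBasis i‖ = 1 := hM.eigenvectorBasis.orthonormal.1 i
  have h2 := real_inner_self_eq_norm_sq (hM.eigenvectorBasis i)
  rw [EuclideanSpace.inner_eq_star_dotProduct, h1] at h2
  simpa using h2

private lemma eig_ge_of_psd {M : Matrix (Fin n) (Fin n) ℝ} (hM : M.IsHermitian) {c : ℝ}
    (h : (M - c • (1 : Matrix (Fin n) (Fin n) ℝ)).PosSemidef) (i : Fin n) :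
    c ≤ hM.eigenvalues i := by
  have h2 := h.dotProduct_mulVec_nonneg (⇑(hM.eigenvectorBasis i))
  rw [sub_mulVec, smul_mulVec, one_mulVec, hM.mulVec_eigenvectorBasis,
    dotProduct_sub, dotProduct_smul, dotProduct_smul, eigvec_dot_self hM i] at h2
  simp only [smul_eq_mul, mul_one] at h2
  linarith

private lemma eig_le_of_psd {M : Matrix (Fin n) (Fin n) ℝ} (hM : M.IsHermitian) {c : ℝ}
    (h : (c • (1 : Matrix (Fin n) (Fin n) ℝ) - M).PosSemidef) (i : Fin n) :
    hM.eigenvalues i ≤ c := by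
  have h2 := h.dotProduct_mulVec_nonneg (⇑(hM.eigenvectorBasis i))
  rw [sub_mulVec, smul_mulVec, one_mulVec, hM.mulVec_eigenvectorBasis,
    dotProduct_sub, dotProduct_smul, dotProduct_smul, eigvec_dot_self hM i] at h2
  simp only [smul_eq_mul, mul_one] at h2
  linarith

end Aux

/-- Conditioning of the preconditioned system.  Let `K = K_XX + σ² I` and `P̂ = P + σ² I` with
`K_XX`, `P` symmetric positive semidefinite, and `E = K_XX − P` with spectral norm (largest
absolute eigenvalue) at most `ε`.  If `S` is any symmetric square root of `P̂`
(so `S⁻¹ K S⁻¹` plays the role of `P̂^{-1/2} K P̂^{-1/2}`), then every eigenvalue `λ` of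
`S⁻¹ K S⁻¹` satisfies `1 − ε/σ² ≤ λ ≤ 1 + ε/σ²`; hence for `ε < σ²` the condition number
`κ(P̂⁻¹K)` (ratio of largest to smallest such eigenvalue) is at most
`(1 + ε/σ²)/(1 − ε/σ²)`. -/
theorem preconditioned_condition_number_bound {n : ℕ} [NeZero n]
    (Kxx P : Matrix (Fin n) (Fin n) ℝ)
    (hKxx : Kxx.PosSemidef) (hP : P.PosSemidef)
    (σ ε : ℝ) (hσ : 0 < σ)
    (hEH : (Kxx - P).IsHermitian)
    (hE : ∀ i : Fin n, |hEH.eigenvalues i| ≤ ε)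
    (S : Matrix (Fin n) (Fin n) ℝ) (hS : S.IsSymm)
    (hSsq : S * S = P + σ ^ 2 • (1 : Matrix (Fin n) (Fin n) ℝ))
    (hM : (S⁻¹ * (Kxx + σ ^ 2 • (1 : Matrix (Fin n) (Fin n) ℝ)) * S⁻¹).IsHermitian) :
    (∀ i : Fin n, 1 - ε / σ ^ 2 ≤ hM.eigenvalues i ∧ hM.eigenvalues i ≤ 1 + ε / σ ^ 2) ∧
    (ε < σ ^ 2 →
      (Finset.univ.sup' Finset.univ_nonempty hM.eigenvalues) /
          (Finset.univ.inf' Finset.univ_nonempty hM.eigenvalues)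
        ≤ (1 + ε / σ ^ 2) / (1 - ε / σ ^ 2)) := by
  have hσ2 : (0:ℝ) < σ ^ 2 := by positivity
  set t : ℝ := ε / σ ^ 2 with ht
  have i0 : Fin n := ⟨0, Nat.pos_of_ne_zero (NeZero.ne n)⟩
  have hε0 : 0 ≤ ε := le_trans (abs_nonneg _) (hE i0)
  have ht0 : 0 ≤ t := div_nonneg hε0 hσ2.le
  have hts : t * σ ^ 2 = ε := div_mul_cancel₀ ε hσ2.ne'
  set K : Matrix (Fin n) (Fin n) ℝ := Kxx + σ ^ 2 • (1 : Matrix (Fin n) (Fin n) ℝ) with hK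
  -- P̂ is positive definite
  have hone : ((σ ^ 2) • (1 : Matrix (Fin n) (Fin n) ℝ)).PosDef := by
    rw [smul_one_eq_diagonal]
    exact posDef_diagonal_iff.mpr fun i => hσ2
  have hPhat : (P + σ ^ 2 • (1 : Matrix (Fin n) (Fin n) ℝ)).PosDef := Matrix.PosDef.posSemidef_add hP hone
  -- S is invertible
  have hdet : S.det ≠ 0 := by
    have hdd := congrArg Matrix.det hSsq
    rw [det_mul] at hdd
    intro h0
    rw [h0, mul_zero] at hdd
    exact hPhat.det_pos.ne' hdd.symm
  have hS1 : S⁻¹ * S = 1 := nonsing_inv_mul S (Ne.isUnit hdet)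
  have hS2 : S * S⁻¹ = 1 := mul_nonsing_inv S (Ne.isUnit hdet)
  have hSS : S⁻¹ * (S * S) * S⁻¹ = 1 := by
    rw [← mul_assoc, hS1, one_mul, hS2]
  -- conjugation identity
  have conj : ∀ c : ℝ, S⁻¹ * (K - c • (S * S)) * S⁻¹
      = S⁻¹ * K * S⁻¹ - c • (1 : Matrix (Fin n) (Fin n) ℝ) := by
    intro c
    rw [Matrix.mul_sub, Matrix.sub_mul, Matrix.mul_smul, Matrix.smul_mul, hSS]
  -- the two shifted matrices are PSD
  have hEup : ∀ i, hEH.eigenvalues i ≤ ε := fun i => (abs_le.mp (hE i)).2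
  have hElo : ∀ i, -ε ≤ hEH.eigenvalues i := fun i => (abs_le.mp (hE i)).1
  have hX1 : (K - (1 - t) • (S * S)).PosSemidef := by
    have hrw : K - (1 - t) • (S * S)
        = t • P + (ε • (1 : Matrix (Fin n) (Fin n) ℝ) + (Kxx - P)) := by
      rw [hSsq, hK, ← hts]
      module
    rw [hrw]
    exact (smul_psd hP ht0).add (shift_add_psd hEH hElo)
  have hX2 : ((1 + t) • (S * S) - K).PosSemidef := by
    have hrw : (1 + t) • (S * S) - K
        = t • P + (ε • (1 : Matrix (Fin n) (Fin n) ℝ) - (Kxx - P)) := by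
      rw [hSsq, hK, ← hts]
      module
    rw [hrw]
    exact (smul_psd hP ht0).add (shift_sub_psd hEH hEup)
  -- symmetric inverse
  have hSH : (S⁻¹)ᴴ = S⁻¹ := by
    have hSH0 : Sᴴ = S := by
      ext i j
      rw [conjTranspose_apply, star_trivial, hS.apply]
    rw [conjTranspose_nonsing_inv, hSH0]
  have hMlo : (S⁻¹ * K * S⁻¹ - (1 - t) • (1 : Matrix (Fin n) (Fin n) ℝ)).PosSemidef := by
    rw [← conj (1 - t)]
    have := hX1.mul_mul_conjTranspose_same S⁻¹
    rwa [hSH] at this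
  have hMhi : ((1 + t) • (1 : Matrix (Fin n) (Fin n) ℝ) - S⁻¹ * K * S⁻¹).PosSemidef := by
    have hconj : S⁻¹ * ((1 + t) • (S * S) - K) * S⁻¹
        = (1 + t) • (1 : Matrix (Fin n) (Fin n) ℝ) - S⁻¹ * K * S⁻¹ := by
      rw [Matrix.mul_sub, Matrix.sub_mul, Matrix.mul_smul, Matrix.smul_mul, hSS]
    rw [← hconj]
    have := hX2.mul_mul_conjTranspose_same S⁻¹
    rwa [hSH] at this
  have hbound : ∀ i : Fin n, 1 - t ≤ hM.eigenvalues i ∧ hM.eigenvalues i ≤ 1 + t :=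
    fun i => ⟨eig_ge_of_psd hM hMlo i, eig_le_of_psd hM hMhi i⟩
  refine ⟨hbound, fun hlt => ?_⟩
  have ht1 : t < 1 := (div_lt_one hσ2).mpr hlt
  have hinf : 1 - t ≤ Finset.univ.inf' Finset.univ_nonempty hM.eigenvalues :=
    Finset.le_inf' _ _ fun i _ => (hbound i).1
  have hsup : Finset.univ.sup' Finset.univ_nonempty hM.eigenvalues ≤ 1 + t :=
    Finset.sup'_le _ _ fun i _ => (hbound i).2
  exact div_le_div₀ (by linarith) hsup (by linarith) hinf
end
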